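/- Let P and Q be PMFs on a finite set X and let α > 0, α ≠ 1. Define the transformed PMFs P̂(x) = P(x)^α / Σ_{x'} P(x')^α and Q̂(x) = Q(x)^α / Σ_{x'} Q(x')^α. Then the relative α-entropy equals the Rényi divergence of order 1/α between the transformed PMFs: Δ_α(P‖Q) = D_{1/α}(P̂‖Q̂). -/

import Mathlib

open scoped ENNReal

/-- `P` is a probability mass function on the finite type `X` (values in `ℝ≥0∞`, so the
conventions `0/0 = 0` and `p/0 = ∞` can be expressed exactly). -/
def IsPMF {X : Type*} [Fintype X] (P : X → ℝ≥0∞) : Prop :=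
  ∑ x, P x = 1

/-- Base-2 logarithm of an extended nonnegative real, with values in `EReal`
(`log₂ 0 = ⊥`, `log₂ ∞ = ⊤`). -/
noncomputable def elogb2 (s : ℝ≥0∞) : EReal :=
  (((Real.log 2)⁻¹ : ℝ) : EReal) * ENNReal.log s

/-- Relative `α`-entropy `Δ_α(P‖Q)` with values in `EReal`; the `ℝ≥0∞` conventions
`0 ^ y = ∞` for `y < 0` and `0 * ∞ = 0` match the conventions `0/0 = 0`, `p/0 = ∞`. -/
noncomputable def relAlphaEntropy {X : Type*} [Fintype X] (α : ℝ) (P Q : X → ℝ≥0∞) : EReal :=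
  ((α / (1 - α) : ℝ) : EReal) * elogb2 (∑ x, P x * Q x ^ (α - 1))
    + elogb2 (∑ x, Q x ^ α)
    - (((1 - α)⁻¹ : ℝ) : EReal) * elogb2 (∑ x, P x ^ α)

/-- Rényi divergence `D_β(P‖Q)` with values in `EReal`; the `ℝ≥0∞` conventions match
the conventions `0/0 = 0`, `p/0 = ∞`. -/
noncomputable def renyiDiv {X : Type*} [Fintype X] (β : ℝ) (P Q : X → ℝ≥0∞) : EReal :=
  (((β - 1)⁻¹ : ℝ) : EReal) * elogb2 (∑ x, P x ^ β * Q x ^ (1 - β))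

/-- The `α`-transform of a PMF: `Q̂(x) = Q(x)^α / Σ_{x'} Q(x')^α`. -/
noncomputable def alphaTransform {X : Type*} [Fintype X] (α : ℝ) (Q : X → ℝ≥0∞) :
    X → ℝ≥0∞ :=
  fun x => Q x ^ α / ∑ x', Q x' ^ α

section Aux

variable {X : Type*} [Fintype X]

lemma pmf_le_one {P : X → ℝ≥0∞} (hP : IsPMF P) (x : X) : P x ≤ 1 := by
  rw [IsPMF] at hP
  calc P x ≤ ∑ x', P x' := Finset.single_le_sum (fun _ _ => zero_le) (Finset.mem_univ x)
  _ = 1 := hP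

lemma pmf_ne_top {P : X → ℝ≥0∞} (hP : IsPMF P) (x : X) : P x ≠ ⊤ :=
  ((pmf_le_one hP x).trans_lt ENNReal.one_lt_top).ne

lemma pmf_pow_sum_ne_zero {P : X → ℝ≥0∞} (hP : IsPMF P) {α : ℝ} (hα : 0 < α) :
    (∑ x, P x ^ α) ≠ 0 := by
  intro h
  rw [Finset.sum_eq_zero_iff] at h
  have : ∑ x, P x = 0 := Finset.sum_eq_zero fun x _ => by
    have := h x (Finset.mem_univ x)
    rwa [ENNReal.rpow_eq_zero_iff_of_pos hα] at this
  rw [IsPMF] at hP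
  simp [hP] at this

lemma pmf_pow_sum_ne_top {P : X → ℝ≥0∞} (hP : IsPMF P) {α : ℝ} (hα : 0 < α) :
    (∑ x, P x ^ α) ≠ ⊤ := by
  refine (ENNReal.sum_lt_top.mpr fun x _ => ?_).ne
  exact (ENNReal.rpow_le_one (pmf_le_one hP x) hα.le).trans_lt ENNReal.one_lt_top

end Aux

/-- `Δ_α(P‖Q) = D_{1/α}(P̂‖Q̂)`, where `P̂` and `Q̂` are the `α`-transforms
of `P` and `Q`. -/
theorem relAlphaEntropy_eq_renyiDiv_transform
    {X : Type*} [Fintype X] (P Q : X → ℝ≥0∞) (hP : IsPMF P) (hQ : IsPMF Q)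
    (α : ℝ) (hα : 0 < α) (hα1 : α ≠ 1) :
    relAlphaEntropy α P Q = renyiDiv (1 / α) (alphaTransform α P) (alphaTransform α Q) := by
  have hα0 : α ≠ 0 := hα.ne'
  have h1α : (1 : ℝ) - α ≠ 0 := sub_ne_zero.mpr (Ne.symm hα1)
  set SP : ℝ≥0∞ := ∑ x, P x ^ α with hSP
  set SQ : ℝ≥0∞ := ∑ x, Q x ^ α with hSQ
  set T : ℝ≥0∞ := ∑ x, P x * Q x ^ (α - 1) with hT
  have hSP0 : SP ≠ 0 := pmf_pow_sum_ne_zero hP hα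
  have hSPt : SP ≠ ⊤ := pmf_pow_sum_ne_top hP hα
  have hSQ0 : SQ ≠ 0 := pmf_pow_sum_ne_zero hQ hα
  have hSQt : SQ ≠ ⊤ := pmf_pow_sum_ne_top hQ hα
  set β : ℝ := 1 / α with hβ
  set e : ℝ := 1 - β with he
  set D : ℝ≥0∞ := SP ^ β * SQ ^ e with hD
  have hSPβ0 : SP ^ β ≠ 0 := by
    simp [ENNReal.rpow_eq_zero_iff, hSP0, hSPt]
  have hSPβt : SP ^ β ≠ ⊤ := by
    simp [ENNReal.rpow_eq_top_iff, hSP0, hSPt]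
  have hSQe0 : SQ ^ e ≠ 0 := by
    simp [ENNReal.rpow_eq_zero_iff, hSQ0, hSQt]
  have hSQet : SQ ^ e ≠ ⊤ := by
    simp [ENNReal.rpow_eq_top_iff, hSQ0, hSQt]
  have hD0 : D ≠ 0 := mul_ne_zero hSPβ0 hSQe0
  have hDt : D ≠ ⊤ := ENNReal.mul_ne_top hSPβt hSQet
  -- key sum identity
  have hsum : ∑ x, (alphaTransform α P x) ^ β * (alphaTransform α Q x) ^ (1 - β) = T / D := by
    have : ∀ x, (alphaTransform α P x) ^ β * (alphaTransform α Q x) ^ (1 - β)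
        = (P x * Q x ^ (α - 1)) * D⁻¹ := by
      intro x
      have hPt : ∀ y, P y ≠ ⊤ := pmf_ne_top hP
      have hQt : ∀ y, Q y ≠ ⊤ := pmf_ne_top hQ
      have h1 : (alphaTransform α P x) ^ β = P x * (SP ^ β)⁻¹ := by
        rw [alphaTransform, ← hSP, ENNReal.div_rpow_of_nonneg _ _ (by positivity : (0:ℝ) ≤ β),
          ← ENNReal.rpow_mul]
        rw [show α * β = 1 by rw [hβ, mul_one_div, div_self hα0], ENNReal.rpow_one,
          div_eq_mul_inv]
      have h2 : (alphaTransform α Q x) ^ (1 - β) = Q x ^ (α - 1) * (SQ ^ e)⁻¹ := by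
        rw [alphaTransform, ← hSQ, div_eq_mul_inv,
          ENNReal.mul_rpow_of_ne_top (ENNReal.rpow_ne_top_of_nonneg hα.le (hQt x))
            (ENNReal.inv_ne_top.mpr hSQ0), ENNReal.inv_rpow, ← ENNReal.rpow_mul, ← he]
        rw [show α * e = α - 1 by
          rw [he, hβ, mul_sub, mul_one, mul_one_div, div_self hα0]]
      rw [h1, h2, hD, ENNReal.mul_inv (Or.inl hSPβ0) (Or.inl hSPβt)]
      ring
    rw [Finset.sum_congr rfl fun x _ => this x, ← Finset.sum_mul, ← hT, div_eq_mul_inv]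
  -- log facts
  have hk : (0 : ℝ) < (Real.log 2)⁻¹ := by positivity
  set k : ℝ := (Real.log 2)⁻¹ with hkdef
  set lsp : ℝ := Real.log SP.toReal with hlsp
  set lsq : ℝ := Real.log SQ.toReal with hlsq
  have hlogSP : ENNReal.log SP = (lsp : EReal) :=
    ENNReal.log_pos_real' (ENNReal.toReal_pos hSP0 hSPt)
  have hlogSQ : ENNReal.log SQ = (lsq : EReal) :=
    ENNReal.log_pos_real' (ENNReal.toReal_pos hSQ0 hSQt)
  have hlogD : ENNReal.log D = ((β * lsp + e * lsq : ℝ) : EReal) := by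
    rw [hD, ENNReal.log_mul_add, ENNReal.log_rpow, ENNReal.log_rpow, hlogSP, hlogSQ]
    push_cast
    rfl
  have hcoeff : (β - 1)⁻¹ = α / (1 - α) := by
    rw [hβ, show 1 / α - 1 = (1 - α) / α by field_simp, inv_div]
  -- unfold both sides
  rw [relAlphaEntropy, renyiDiv, hsum, hcoeff, ← hSP, ← hSQ, ← hT]
  rw [show elogb2 SQ = ((k * lsq : ℝ) : EReal) by rw [elogb2, hlogSQ]; push_cast; rfl,
    show elogb2 SP = ((k * lsp : ℝ) : EReal) by rw [elogb2, hlogSP]; push_cast; rfl]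
  have hlogTD : ENNReal.log (T / D) = ENNReal.log T - ((β * lsp + e * lsq : ℝ) : EReal) := by
    rw [div_eq_mul_inv, ENNReal.log_mul_add, ENNReal.log_inv, hlogD, sub_eq_add_neg]
  by_cases hT0 : T = 0
  · -- in this case α > 1
    obtain ⟨x, hx⟩ : ∃ x, P x ≠ 0 := by
      by_contra h
      push_neg at h
      rw [IsPMF] at hP
      simp [h] at hP
    have hterm : P x * Q x ^ (α - 1) = 0 := by
      rw [hT, Finset.sum_eq_zero_iff] at hT0
      exact hT0 x (Finset.mem_univ x)
    have hα1' : 1 < α := by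
      rcases mul_eq_zero.mp hterm with h | h
      · exact absurd h hx
      · rcases ENNReal.rpow_eq_zero_iff.mp h with ⟨_, h2⟩ | ⟨h1, _⟩
        · linarith
        · exact absurd h1 (pmf_ne_top hQ x)
    have hc : α / (1 - α) < 0 := div_neg_of_pos_of_neg hα (by linarith)
    rw [hT0, ENNReal.zero_div]
    rw [show elogb2 0 = (⊥ : EReal) by
      rw [elogb2, ENNReal.log_zero]; exact EReal.coe_mul_bot_of_pos hk]
    rw [EReal.coe_mul_bot_of_neg hc]
    rw [EReal.top_add_coe]
    rw [show (((1 - α)⁻¹ : ℝ) : EReal) * ((k * lsp : ℝ) : EReal)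
        = (((1 - α)⁻¹ * (k * lsp) : ℝ) : EReal) by push_cast; rfl]
    exact EReal.top_sub_coe _
  by_cases hTt : T = ⊤
  · -- in this case α < 1
    have hTt' : ∑ x, P x * Q x ^ (α - 1) = ⊤ := by rw [← hT]; exact hTt
    obtain ⟨x, -, hx⟩ := ENNReal.sum_eq_top.mp hTt'
    have hα1' : α < 1 := by
      rcases ENNReal.mul_eq_top.mp hx with ⟨_, h2⟩ | ⟨h1, _⟩
      · rcases ENNReal.rpow_eq_top_iff.mp h2 with ⟨_, h4⟩ | ⟨h3, _⟩
        · linarith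
        · exact absurd h3 (pmf_ne_top hQ x)
      · exact absurd h1 (pmf_ne_top hP x)
    have hc : 0 < α / (1 - α) := div_pos hα (by linarith)
    rw [hTt, ENNReal.top_div_of_ne_top hDt]
    rw [show elogb2 ⊤ = (⊤ : EReal) by
      rw [elogb2, ENNReal.log_top]; exact EReal.coe_mul_top_of_pos hk]
    rw [EReal.coe_mul_top_of_pos hc, EReal.top_add_coe]
    rw [show (((1 - α)⁻¹ : ℝ) : EReal) * ((k * lsp : ℝ) : EReal)
        = (((1 - α)⁻¹ * (k * lsp) : ℝ) : EReal) by push_cast; rfl]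
    exact EReal.top_sub_coe _
  · -- finite positive case
    set lt : ℝ := Real.log T.toReal with hlt
    have hlogT : ENNReal.log T = (lt : EReal) :=
      ENNReal.log_pos_real' (ENNReal.toReal_pos hT0 hTt)
    rw [show elogb2 T = ((k * lt : ℝ) : EReal) by rw [elogb2, hlogT]; push_cast; rfl,
      show elogb2 (T / D) = ((k * (lt - (β * lsp + e * lsq)) : ℝ) : EReal) by
        rw [elogb2, hlogTD, hlogT]; push_cast; rfl]
    push_cast
    norm_cast
    rw [hβ, he, hβ]
    field_simp
    ring
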